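/- Theorem 3.4, product threshold bound: Assume n ≥ 2 and that for each r ∈ {1,…,n} there is a constant C_r ≥ 0 such that ∑_{i=1}^m |Tr(σ^{(r)} a^{(r)}_i)|² ≤ C_r for every state σ^{(r)} on ℂ^{d_r}. Then |Tr(σB)| ≤ ∏_{r=1}^n C_r^{1/2} for every product state σ ∈ 𝒫; in particular Γ_prod(B) ≤ ∏_{r=1}^n C_r^{1/2}. -/

import Mathlib

open scoped BigOperators ComplexOrder

namespace Parity

variable {n : ℕ} {d : Fin n → ℕ}

/-- Kronecker product of `n` matrices, as a matrix over the product index set. -/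
def kron (a : ∀ r : Fin n, Matrix (Fin (d r)) (Fin (d r)) ℂ) :
    Matrix (∀ r, Fin (d r)) (∀ r, Fin (d r)) ℂ :=
  fun i j => ∏ r, a r (i r) (j r)

/-- The ℓ²-operator norm of a complex matrix. -/
noncomputable def opNorm {I : Type*} [Fintype I] [DecidableEq I] (A : Matrix I I ℂ) : ℝ :=
  ‖Matrix.toEuclideanCLM (𝕜 := ℂ) A‖

/-- The defect weight φ⁽ⁿ⁾ᵢⱼ. -/
noncomputable def phi {m : ℕ} (a : ∀ r : Fin n, Fin m → Matrix (Fin (d r)) (Fin (d r)) ℂ)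
    (i j : Fin m) : ℝ :=
  (2 : ℝ) ^ ((1 : ℤ) - n) *
    ∑ S ∈ Finset.univ.filter (fun S : Finset (Fin n) => Even S.card),
      (∏ r ∈ S, opNorm (a r i * a r j - a r j * a r i)) *
        (∏ r ∈ Sᶜ, opNorm (a r i * a r j + a r j * a r i))

/-- A state: positive semidefinite with trace one. -/
def IsState {I : Type*} [Fintype I] (ρ : Matrix I I ℂ) : Prop :=
  ρ.PosSemidef ∧ ρ.trace = 1

/-- The trace norm `Tr √(AᴴA)`. -/
noncomputable def traceNorm {I : Type*} [Fintype I] [DecidableEq I] (A : Matrix I I ℂ) : ℝ :=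
  (((Matrix.posSemidef_conjTranspose_mul_self A).1.eigenvectorUnitary : Matrix I I ℂ) *
      Matrix.diagonal (((↑) : ℝ → ℂ) ∘ (√·) ∘ (Matrix.posSemidef_conjTranspose_mul_self A).1.eigenvalues) *
      (star (Matrix.posSemidef_conjTranspose_mul_self A).1.eigenvectorUnitary : Matrix I I ℂ)).trace.re

/-- Logarithm of a Hermitian matrix via the functional calculus (junk value otherwise);
an eigenvalue `0` contributes `Real.log 0 = 0`. -/
noncomputable def mlog {I : Type*} [Fintype I] [DecidableEq I] (A : Matrix I I ℂ) :
    Matrix I I ℂ :=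
  if hA : A.IsHermitian then
    (hA.eigenvectorUnitary : Matrix I I ℂ) *
      Matrix.diagonal (fun i => (Real.log (hA.eigenvalues i) : ℂ)) *
      (star hA.eigenvectorUnitary : Matrix I I ℂ)
  else 0

/-- Quantum relative entropy `D(ρ‖σ) = Tr(ρ (log ρ − log σ))` (natural logarithm). -/
noncomputable def relEntropy {I : Type*} [Fintype I] [DecidableEq I] (ρ σ : Matrix I I ℂ) : ℝ :=
  (Matrix.trace (ρ * (mlog ρ - mlog σ))).re

/-- The `r`-th marginal (partial trace over all other factors). -/
noncomputable def marginal (ρ : Matrix (∀ r, Fin (d r)) (∀ r, Fin (d r)) ℂ) (r : Fin n) :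
    Matrix (Fin (d r)) (Fin (d r)) ℂ :=
  fun a b => ∑ k : ∀ s, Fin (d s), if k r = a then ρ k (Function.update k r b) else 0

/-- Total correlation `I_tot(ρ) = D(ρ‖ρ₁ ⊗ ⋯ ⊗ ρₙ)`. -/
noncomputable def Itot (ρ : Matrix (∀ r, Fin (d r)) (∀ r, Fin (d r)) ℂ) : ℝ :=
  relEntropy ρ (kron (fun r => marginal ρ r))

/-- The set of product states. -/
def ProdStates (d : Fin n → ℕ) : Set (Matrix (∀ r, Fin (d r)) (∀ r, Fin (d r)) ℂ) :=
  {σ | ∃ s : ∀ r : Fin n, Matrix (Fin (d r)) (Fin (d r)) ℂ,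
    (∀ r, IsState (s r)) ∧ σ = kron s}

/-- The product threshold `Γ_prod(B)`. -/
noncomputable def Gamma (d : Fin n → ℕ) (B : Matrix (∀ r, Fin (d r)) (∀ r, Fin (d r)) ℂ) : ℝ :=
  sSup {x : ℝ | ∃ σ ∈ ProdStates d, x = (Matrix.trace (σ * B)).re}

/-- The excess `Δ_B(ρ)`. -/
noncomputable def excess (d : Fin n → ℕ) (B ρ : Matrix (∀ r, Fin (d r)) (∀ r, Fin (d r)) ℂ) : ℝ :=
  max ((Matrix.trace (ρ * B)).re - Gamma d B) 0

end Parity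


section AuxLemmas

private lemma sum_mul_le_sum_mul_sum {ι : Type*} [Fintype ι] (f g : ι → ℝ)
    (hf : ∀ i, 0 ≤ f i) (hg : ∀ i, 0 ≤ g i) :
    ∑ i, f i * g i ≤ (∑ i, f i) * (∑ i, g i) := by
  rw [Finset.sum_mul_sum]
  refine Finset.sum_le_sum fun i _ => ?_
  exact Finset.single_le_sum (f := fun j => f i * g j)
    (fun j _ => mul_nonneg (hf i) (hg j)) (Finset.mem_univ i)

private lemma sum_prod_le_prod_sum {ι κ : Type*} [Fintype ι] :
    ∀ (s : Finset κ), s.Nonempty → ∀ (y : κ → ι → ℝ), (∀ k i, 0 ≤ y k i) →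
      ∑ i, ∏ k ∈ s, y k i ≤ ∏ k ∈ s, ∑ i, y k i := by
  intro s
  induction s using Finset.cons_induction with
  | empty => intro h; exact absurd h (by simp)
  | cons a t ha ih =>
    intro _ y hy
    simp_rw [Finset.prod_cons]
    rcases t.eq_empty_or_nonempty with rfl | ht
    · simp
    · calc ∑ i, y a i * ∏ k ∈ t, y k i
          ≤ (∑ i, y a i) * (∑ i, ∏ k ∈ t, y k i) :=
            sum_mul_le_sum_mul_sum _ _ (hy a)
              (fun i => Finset.prod_nonneg fun k _ => hy k i)
        _ ≤ (∑ i, y a i) * ∏ k ∈ t, ∑ i, y k i :=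
            mul_le_mul_of_nonneg_left (ih ht y hy)
              (Finset.sum_nonneg fun i _ => hy a i)

private lemma sum_prod_le_prod_sqrt {ι : Type*} [Fintype ι] {n : ℕ} (hn : 2 ≤ n)
    (x : Fin n → ι → ℝ) (hx : ∀ r i, 0 ≤ x r i) :
    ∑ i, ∏ r, x r i ≤ ∏ r, Real.sqrt (∑ i, x r i ^ 2) := by
  have hA : 0 ≤ ∑ i, ∏ r, x r i :=
    Finset.sum_nonneg fun i _ => Finset.prod_nonneg fun r _ => hx r i
  have hB : 0 ≤ ∏ r, Real.sqrt (∑ i, x r i ^ 2) :=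
    Finset.prod_nonneg fun r _ => Real.sqrt_nonneg _
  refine (pow_le_pow_iff_left₀ hA hB (two_ne_zero)).mp ?_
  set r0 : Fin n := ⟨0, by omega⟩ with hr0
  have herase : (Finset.univ.erase r0).Nonempty := by
    refine ⟨⟨1, by omega⟩, ?_⟩
    simp [Finset.mem_erase, hr0, Fin.ext_iff]
  calc (∑ i, ∏ r, x r i) ^ 2
      = (∑ i, x r0 i * ∏ r ∈ Finset.univ.erase r0, x r i) ^ 2 := by
        congr 1
        exact Finset.sum_congr rfl fun i _ =>
          (Finset.mul_prod_erase _ _ (Finset.mem_univ r0)).symm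
    _ ≤ (∑ i, x r0 i ^ 2) * ∑ i, (∏ r ∈ Finset.univ.erase r0, x r i) ^ 2 :=
        Finset.sum_mul_sq_le_sq_mul_sq _ _ _
    _ ≤ (∑ i, x r0 i ^ 2) * ∏ r ∈ Finset.univ.erase r0, ∑ i, x r i ^ 2 := by
        refine mul_le_mul_of_nonneg_left ?_ (Finset.sum_nonneg fun i _ => sq_nonneg _)
        calc ∑ i, (∏ r ∈ Finset.univ.erase r0, x r i) ^ 2
            = ∑ i, ∏ r ∈ Finset.univ.erase r0, x r i ^ 2 := by
              exact Finset.sum_congr rfl fun i _ => (Finset.prod_pow _ _ _).symm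
          _ ≤ _ := sum_prod_le_prod_sum _ herase _ (fun k i => sq_nonneg _)
    _ = ∏ r, ∑ i, x r i ^ 2 :=
        Finset.mul_prod_erase Finset.univ (fun r => ∑ i, x r i ^ 2) (Finset.mem_univ r0)
    _ = (∏ r, Real.sqrt (∑ i, x r i ^ 2)) ^ 2 := by
        rw [← Finset.prod_pow]
        exact Finset.prod_congr rfl fun r _ =>
          (Real.sq_sqrt (Finset.sum_nonneg fun i _ => sq_nonneg _)).symm

private lemma trace_kron_mul_kron {n : ℕ} {d : Fin n → ℕ}
    (s b : ∀ r : Fin n, Matrix (Fin (d r)) (Fin (d r)) ℂ) :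
    Matrix.trace (Parity.kron s * Parity.kron b) = ∏ r, Matrix.trace (s r * b r) := by
  classical
  have hR : ∀ r, Matrix.trace (s r * b r)
      = ∑ p : Fin (d r) × Fin (d r), s r p.1 p.2 * b r p.2 p.1 := by
    intro r
    simp only [Matrix.trace, Matrix.diag, Matrix.mul_apply]
    exact (Fintype.sum_prod_type (fun p : Fin (d r) × Fin (d r) => s r p.1 p.2 * b r p.2 p.1)).symm
  simp_rw [hR]
  rw [Fintype.prod_sum]
  rw [Matrix.trace]
  simp only [Matrix.diag, Matrix.mul_apply, Parity.kron]
  have := Fintype.sum_equiv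
    (⟨fun x : ∀ r : Fin n, Fin (d r) × Fin (d r) =>
        ((fun r => (x r).1, fun r => (x r).2) :
          (∀ r, Fin (d r)) × (∀ r, Fin (d r))),
      fun p r => (p.1 r, p.2 r), fun x => rfl, fun p => rfl⟩ :
      (∀ r : Fin n, Fin (d r) × Fin (d r)) ≃ (∀ r, Fin (d r)) × (∀ r, Fin (d r)))
    (fun x => ∏ r, s r (x r).1 (x r).2 * b r (x r).2 (x r).1)
    (fun p => (∏ r, s r (p.1 r) (p.2 r)) * ∏ r, b r (p.2 r) (p.1 r))
    (fun x => by simp [Finset.prod_mul_distrib])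
  rw [this, Fintype.sum_prod_type]

open Parity in
/-- Theorem 3.4: product threshold bound under the ℓ² site condition. -/
theorem product_threshold_bound
    {n m : ℕ} {d : Fin n → ℕ} (hn : 2 ≤ n) (hd : ∀ r, 1 ≤ d r) (hm : 1 ≤ m)
    (a : ∀ r : Fin n, Fin m → Matrix (Fin (d r)) (Fin (d r)) ℂ)
    (ha_sa : ∀ r i, (a r i).IsHermitian)
    (ha_norm : ∀ r i, opNorm (a r i) ≤ 1)
    (C : Fin n → ℝ) (hC : ∀ r, 0 ≤ C r)
    (hsite : ∀ r, ∀ σ : Matrix (Fin (d r)) (Fin (d r)) ℂ, IsState σ →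
      ∑ i : Fin m, ‖Matrix.trace (σ * a r i)‖ ^ 2 ≤ C r) :
    (∀ σ ∈ ProdStates d,
        ‖Matrix.trace (σ * ∑ i : Fin m, kron (fun r => a r i))‖ ≤
          ∏ r : Fin n, Real.sqrt (C r)) ∧
      Gamma d (∑ i : Fin m, kron (fun r => a r i)) ≤ ∏ r : Fin n, Real.sqrt (C r) := by
  classical
  set bound := ∏ r : Fin n, Real.sqrt (C r) with hbound
  have habs : ∀ σ ∈ ProdStates d,
      ‖Matrix.trace (σ * ∑ i : Fin m, kron (fun r => a r i))‖ ≤ bound := by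
    rintro σ ⟨s, hs, rfl⟩
    have htr : Matrix.trace (kron s * ∑ i : Fin m, kron (fun r => a r i))
        = ∑ i : Fin m, ∏ r, Matrix.trace (s r * a r i) := by
      rw [Matrix.mul_sum, Matrix.trace_sum]
      exact Finset.sum_congr rfl fun i _ => trace_kron_mul_kron s (fun r => a r i)
    rw [htr]
    calc ‖∑ i : Fin m, ∏ r, Matrix.trace (s r * a r i)‖
        ≤ ∑ i : Fin m, ‖∏ r, Matrix.trace (s r * a r i)‖ :=
          norm_sum_le _ _
      _ = ∑ i : Fin m, ∏ r, ‖Matrix.trace (s r * a r i)‖ := by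
          exact Finset.sum_congr rfl fun i _ => norm_prod _ _
      _ ≤ ∏ r, Real.sqrt (∑ i : Fin m, ‖Matrix.trace (s r * a r i)‖ ^ 2) :=
          sum_prod_le_prod_sqrt hn _ (fun r i => norm_nonneg _)
      _ ≤ bound := by
          refine Finset.prod_le_prod (fun r _ => Real.sqrt_nonneg _) fun r _ => ?_
          exact Real.sqrt_le_sqrt (hsite r (s r) (hs r))
  have hbound_nonneg : 0 ≤ bound :=
    Finset.prod_nonneg fun r _ => Real.sqrt_nonneg _
  refine ⟨habs, ?_⟩
  refine Real.sSup_le ?_ hbound_nonneg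
  rintro x ⟨σ, hσ, rfl⟩
  exact le_trans (Complex.re_le_norm _) (habs σ hσ)
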